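/- For any r, s ∈ ℝ, any n ∈ ℕ, and any x ∈ ℝ: g_{r,n}(x) = Σ_{k=0}^{n} C(n,k) · g_{r,k}(s) · g_{s,n−k}(x) (generalized binomial theorem for g-monomials). -/

import Mathlib

open MeasureTheory Set Finset

/-- The jump of `g` at `x`: `Δg(x) = g(x⁺) − g(x)`. -/
noncomputable def jumpOf (g : ℝ → ℝ) (x : ℝ) : ℝ := Function.rightLim g x - g x

/-- Oriented Lebesgue–Stieltjes integral: `∫_a^b f dμ = ∫_{[a,b)} f dμ` if `a ≤ b`,
`= −∫_{[b,a)} f dμ` otherwise. -/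
noncomputable def ointeg (μ : MeasureTheory.Measure ℝ) (f : ℝ → ℝ) (a b : ℝ) : ℝ :=
  if a ≤ b then ∫ s in Set.Ico a b, f s ∂μ else - ∫ s in Set.Ico b a, f s ∂μ

/-- The `g`-monomials centered at `c`, defined from the Lebesgue–Stieltjes measure `μ` of `g`:
`g_0 ≡ 1`, `g_{n+1}(x) = (n+1) ∫_c^x g_n dμ` (oriented). -/
noncomputable def gMon (μ : MeasureTheory.Measure ℝ) (c : ℝ) : ℕ → ℝ → ℝ
  | 0 => fun _ => 1
  | n + 1 => fun x => ((n : ℝ) + 1) * ointeg μ (gMon μ c n) c x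


section aux
variable (μ : MeasureTheory.Measure ℝ)

lemma ointeg_symm (f : ℝ → ℝ) (a b : ℝ) : ointeg μ f a b = - ointeg μ f b a := by
  rcases lt_trichotomy a b with h | rfl | h
  · rw [ointeg, ointeg, if_pos h.le, if_neg (not_le.2 h), neg_neg]
  · simp [ointeg]
  · rw [ointeg, ointeg, if_neg (not_le.2 h), if_pos h.le]

lemma ointeg_add_base (f : ℝ → ℝ) (hf : ∀ a b : ℝ, IntegrableOn f (Ico a b) μ)
    {a b c : ℝ} (hab : a ≤ b) (hbc : b ≤ c) :
    ointeg μ f a b + ointeg μ f b c = ointeg μ f a c := by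
  rw [ointeg, ointeg, ointeg, if_pos hab, if_pos hbc, if_pos (hab.trans hbc),
    ← Set.Ico_union_Ico_eq_Ico hab hbc,
    setIntegral_union (Set.Ico_disjoint_Ico_same) measurableSet_Ico (hf a b) (hf b c)]

lemma ointeg_add (f : ℝ → ℝ) (hf : ∀ a b : ℝ, IntegrableOn f (Ico a b) μ)
    (a b c : ℝ) : ointeg μ f a b + ointeg μ f b c = ointeg μ f a c := by
  set q := min a (min b c) with hq
  have hqa : q ≤ a := min_le_left _ _
  have hqb : q ≤ b := le_trans (min_le_right _ _) (min_le_left _ _)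
  have hqc : q ≤ c := le_trans (min_le_right _ _) (min_le_right _ _)
  have key : ∀ x y : ℝ, q ≤ x → q ≤ y → ointeg μ f x y = ointeg μ f q y - ointeg μ f q x := by
    intro x y hx hy
    rcases le_total x y with h | h
    · have := ointeg_add_base μ f hf hx h; linarith
    · have := ointeg_add_base μ f hf hy h
      rw [ointeg_symm μ f x y]; linarith
  rw [key a b hqa hqb, key b c hqb hqc, key a c hqa hqc]; ring

lemma ointeg_sub (f g : ℝ → ℝ) (hf : ∀ a b : ℝ, IntegrableOn f (Ico a b) μ)
    (hg : ∀ a b : ℝ, IntegrableOn g (Ico a b) μ) (a b : ℝ) :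
    ointeg μ (fun t => f t - g t) a b = ointeg μ f a b - ointeg μ g a b := by
  simp only [ointeg]; split_ifs with h
  · exact integral_sub (hf a b) (hg a b)
  · rw [integral_sub (hf b a) (hg b a)]; ring

lemma ointeg_monotone (f : ℝ → ℝ) (hf : ∀ a b : ℝ, IntegrableOn f (Ico a b) μ)
    (hf0 : ∀ t : ℝ, 0 ≤ f t) (c : ℝ) : Monotone (fun x => ointeg μ f c x) := by
  intro x y hxy
  have h1 := ointeg_add μ f hf c x y
  have h2 : 0 ≤ ointeg μ f x y := by
    rw [ointeg, if_pos hxy]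
    exact setIntegral_nonneg measurableSet_Ico (fun t _ => hf0 t)
  simp only at *
  linarith

lemma ointeg_measurable (f : ℝ → ℝ) (hf : ∀ a b : ℝ, IntegrableOn f (Ico a b) μ) (c : ℝ) :
    Measurable (fun x => ointeg μ f c x) := by
  have hpos : ∀ a b : ℝ, IntegrableOn (fun t => max (f t) 0) (Ico a b) μ :=
    fun a b => (hf a b).pos_part
  have hneg : ∀ a b : ℝ, IntegrableOn (fun t => max (-f t) 0) (Ico a b) μ :=
    fun a b => (hf a b).neg.pos_part
  have m1 := (ointeg_monotone μ _ hpos (fun t => le_max_right _ _) c).measurable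
  have m2 := (ointeg_monotone μ _ hneg (fun t => le_max_right _ _) c).measurable
  have key : (fun x => ointeg μ f c x)
      = fun x => ointeg μ (fun t => max (f t) 0) c x - ointeg μ (fun t => max (-f t) 0) c x := by
    funext x
    rw [← ointeg_sub μ _ _ hpos hneg]
    congr 1
    funext t
    rcases le_total 0 (f t) with h | h
    · rw [max_eq_left h, max_eq_right (neg_nonpos.2 h)]; ring
    · rw [max_eq_right h, max_eq_left (neg_nonneg.2 h)]; ring
  rw [key]; exact m1.sub m2

lemma ointeg_abs_le (f : ℝ → ℝ) (hf : ∀ a b : ℝ, IntegrableOn f (Ico a b) μ)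
    {c x A B : ℝ} (h1 : A ≤ c) (h2 : A ≤ x) (h3 : c ≤ B) (h4 : x ≤ B) :
    |ointeg μ f c x| ≤ ∫ t in Ico A B, |f t| ∂μ := by
  have hint : IntegrableOn (fun t => |f t|) (Ico A B) μ := (hf A B).abs
  have habs : ∀ u v : ℝ, A ≤ u → v ≤ B →
      |∫ t in Ico u v, f t ∂μ| ≤ ∫ t in Ico A B, |f t| ∂μ := by
    intro u v hu hv
    have h0 : ‖∫ t in Ico u v, f t ∂μ‖ ≤ ∫ t in Ico u v, ‖f t‖ ∂μ :=
      norm_integral_le_integral_norm f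
    calc |∫ t in Ico u v, f t ∂μ| ≤ ∫ t in Ico u v, |f t| ∂μ := by
          simpa [Real.norm_eq_abs] using h0
      _ ≤ ∫ t in Ico A B, |f t| ∂μ :=
          setIntegral_mono_set hint (Filter.Eventually.of_forall fun t => abs_nonneg _)
            (HasSubset.Subset.eventuallyLE (Ico_subset_Ico hu hv))
  simp only [ointeg]; split_ifs with h
  · exact habs c x h1 h4
  · rw [abs_neg]; exact habs x c h2 h3

lemma ointeg_sum {ι : Type*} (t : Finset ι) (F : ι → ℝ → ℝ)
    (hF : ∀ i ∈ t, ∀ a b : ℝ, IntegrableOn (F i) (Ico a b) μ) (a b : ℝ) :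
    ointeg μ (fun x => ∑ i ∈ t, F i x) a b = ∑ i ∈ t, ointeg μ (F i) a b := by
  simp only [ointeg]; split_ifs with h
  · exact integral_finset_sum t (fun i hi => hF i hi a b)
  · rw [integral_finset_sum t (fun i hi => hF i hi b a), ← Finset.sum_neg_distrib]

lemma ointeg_const_mul (r : ℝ) (f : ℝ → ℝ) (a b : ℝ) :
    ointeg μ (fun t => r * f t) a b = r * ointeg μ f a b := by
  simp only [ointeg]; split_ifs with h
  · exact integral_const_mul r f
  · rw [integral_const_mul]; ring

end aux


lemma gMon_prop (μ : MeasureTheory.Measure ℝ) (hfin : ∀ a b : ℝ, μ (Ico a b) < ⊤) (c : ℝ) :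
    ∀ n : ℕ, Measurable (gMon μ c n) ∧ ∀ a b : ℝ, IntegrableOn (gMon μ c n) (Ico a b) μ := by
  intro n
  induction n with
  | zero =>
    refine ⟨measurable_const, fun a b => ?_⟩
    have : IntegrableOn (fun _ : ℝ => (1 : ℝ)) (Ico a b) μ :=
      integrableOn_const (hfin a b).ne
    exact this
  | succ n ih =>
    obtain ⟨hm, hi⟩ := ih
    have hmeas : Measurable (gMon μ c (n + 1)) := by
      show Measurable fun x => ((n : ℝ) + 1) * ointeg μ (gMon μ c n) c x
      exact (ointeg_measurable μ _ hi c).const_mul _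
    refine ⟨hmeas, fun a b => ?_⟩
    set A := min c a with hA
    set B := max c b with hB
    have hbd : ∀ x ∈ Ico a b, |gMon μ c (n + 1) x|
        ≤ ((n : ℝ) + 1) * ∫ t in Ico A B, |gMon μ c n t| ∂μ := by
      intro x hx
      have h1 : |ointeg μ (gMon μ c n) c x| ≤ ∫ t in Ico A B, |gMon μ c n t| ∂μ :=
        ointeg_abs_le μ _ hi (min_le_left _ _) (le_trans (min_le_right _ _) hx.1)
          (le_max_left _ _) (le_trans hx.2.le (le_max_right _ _))
      have h2 : gMon μ c (n + 1) x = ((n : ℝ) + 1) * ointeg μ (gMon μ c n) c x := rfl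
      rw [h2, abs_mul, abs_of_nonneg (by positivity : (0:ℝ) ≤ (n:ℝ)+1)]
      exact mul_le_mul_of_nonneg_left h1 (by positivity)
    refine Integrable.mono'
      ((integrableOn_const (hfin a b).ne :
        IntegrableOn (fun _ => ((n : ℝ) + 1) * ∫ t in Ico A B, |gMon μ c n t| ∂μ) (Ico a b) μ))
      hmeas.aestronglyMeasurable ?_
    filter_upwards [ae_restrict_mem measurableSet_Ico] with x hx
    simpa [Real.norm_eq_abs] using hbd x hx

lemma choose_id (n k : ℕ) (h : k ≤ n) :
    (n + 1) * n.choose k = (n + 1).choose k * (n - k + 1) := by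
  have h1 := Nat.add_one_mul_choose_eq n (n - k)
  rw [Nat.choose_symm h] at h1
  have h2 : n - k + 1 ≤ n + 1 := by omega
  have h3 : (n + 1) - (n - k + 1) = k := by omega
  have h4 : (n + 1).choose (n - k + 1) = (n + 1).choose k := by
    rw [← Nat.choose_symm h2, h3]
  rw [h1, h4]

theorem stmt7 (g : ℝ → ℝ) (μ : MeasureTheory.Measure ℝ)
    (hg : Monotone g) (hlc : ∀ x : ℝ, ContinuousWithinAt g (Set.Iio x) x)
    (hμ : ∀ a b : ℝ, a ≤ b → μ (Set.Ico a b) = ENNReal.ofReal (g b - g a)) :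
    ∀ r s x : ℝ, ∀ n : ℕ,
      gMon μ r n x = ∑ k ∈ Finset.range (n + 1),
        (n.choose k : ℝ) * gMon μ r k s * gMon μ s (n - k) x := by
  have hfin : ∀ a b : ℝ, μ (Ico a b) < ⊤ := by
    intro a b
    rcases le_total a b with h | h
    · rw [hμ a b h]; exact ENNReal.ofReal_lt_top
    · rw [Ico_eq_empty (not_lt.2 h)]; simp
  have hint : ∀ (c : ℝ) (m : ℕ) (a b : ℝ), IntegrableOn (gMon μ c m) (Ico a b) μ :=
    fun c m => (gMon_prop μ hfin c m).2
  intro r s x n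
  induction n generalizing x with
  | zero => simp [gMon]
  | succ n ih =>
    have hsplit : ointeg μ (gMon μ r n) r x
        = ointeg μ (gMon μ r n) r s + ointeg μ (gMon μ r n) s x :=
      (ointeg_add μ _ (hint r n) r s x).symm
    have hfun : gMon μ r n = fun t => ∑ k ∈ Finset.range (n + 1),
        (n.choose k : ℝ) * gMon μ r k s * gMon μ s (n - k) t := funext ih
    have hFint : ∀ k ∈ Finset.range (n + 1), ∀ a b : ℝ,
        IntegrableOn (fun t => (n.choose k : ℝ) * gMon μ r k s * gMon μ s (n - k) t)
          (Ico a b) μ := fun k _ a b => (hint s (n - k) a b).const_mul _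
    have hterm : ∀ k ∈ Finset.range (n + 1),
        ointeg μ (fun t => (n.choose k : ℝ) * gMon μ r k s * gMon μ s (n - k) t) s x
          = (n.choose k : ℝ) * gMon μ r k s * ointeg μ (gMon μ s (n - k)) s x := by
      intro k _
      exact ointeg_const_mul μ _ _ s x
    have hmain : ointeg μ (gMon μ r n) s x = ∑ k ∈ Finset.range (n + 1),
        (n.choose k : ℝ) * gMon μ r k s * ointeg μ (gMon μ s (n - k)) s x := by
      rw [hfun, ointeg_sum μ _ _ hFint s x]
      exact Finset.sum_congr rfl hterm
    have hlhs : gMon μ r (n + 1) x = ((n : ℝ) + 1) * ointeg μ (gMon μ r n) r x := rfl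
    have hlast : ((n + 1).choose (n + 1) : ℝ) * gMon μ r (n + 1) s * gMon μ s (n + 1 - (n + 1)) x
        = ((n : ℝ) + 1) * ointeg μ (gMon μ r n) r s := by
      simp [Nat.choose_self, gMon]
    have hsum : ∀ k ∈ Finset.range (n + 1),
        ((n : ℝ) + 1) * ((n.choose k : ℝ) * gMon μ r k s * ointeg μ (gMon μ s (n - k)) s x)
          = ((n + 1).choose k : ℝ) * gMon μ r k s * gMon μ s (n + 1 - k) x := by
      intro k hk
      have hkn : k ≤ n := Nat.lt_succ_iff.mp (Finset.mem_range.mp hk)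
      have hnk : n + 1 - k = (n - k) + 1 := by omega
      rw [hnk]
      have hgm : gMon μ s ((n - k) + 1) x
          = (((n - k : ℕ) : ℝ) + 1) * ointeg μ (gMon μ s (n - k)) s x := rfl
      rw [hgm]
      have hc : ((n : ℝ) + 1) * (n.choose k : ℝ)
          = ((n + 1).choose k : ℝ) * (((n - k : ℕ) : ℝ) + 1) := by
        exact_mod_cast congrArg (Nat.cast : ℕ → ℝ) (choose_id n k hkn)
      linear_combination gMon μ r k s * ointeg μ (gMon μ s (n - k)) s x * hc
    rw [hlhs, hsplit, mul_add, hmain, Finset.mul_sum, Finset.sum_congr rfl hsum]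
    conv_rhs => rw [Finset.sum_range_succ]
    rw [hlast]
    ring
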